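/- arXiv:0912.0962 — 2 statements merged into one kernel-verified Lean document; each statement's English description precedes it below -/
import Mathlib

section
/- Let ν be a random variable on [0,1] with probability density f_ν(ν) = ∑_{i=0}^{N} ∑_{j=1}^{i(M-1)} C(N,i) C(i(M-1),j) (-1)^{i+j} j ν^{j-1}, where N ≥ 1 and M ≥ 2 are integers. Then E[ln ν] = ∑_{i=0}^{N} C(N,i) (-1)^i ∑_{l=1}^{i(M-1)} 1/l. -/
open Finset MeasureTheory intervalIntegral

-- Integrability of log x * x^k on [0,1]
lemma aux_integrable_log_mul_pow (k : ℕ) :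
    IntervalIntegrable (fun x : ℝ => Real.log x * x ^ k) volume 0 1 := by
  have hg : IntervalIntegrable (fun x : ℝ => 2 * x ^ (-(1/2) : ℝ)) volume 0 1 :=
    (intervalIntegrable_rpow' (by norm_num)).const_mul 2
  apply hg.mono_fun
  · exact (Real.measurable_log.mul (measurable_id.pow_const k)).aestronglyMeasurable
  · rw [Set.uIoc_of_le (by norm_num : (0:ℝ) ≤ 1)]
    filter_upwards [ae_restrict_mem measurableSet_Ioc] with x hx
    obtain ⟨hx0, hx1⟩ := hx
    have hp : (0:ℝ) < x ^ (-(1/2):ℝ) := Real.rpow_pos_of_pos hx0 _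
    have hxk : |x ^ k| ≤ 1 := by
      rw [abs_of_nonneg (pow_nonneg hx0.le _)]
      exact pow_le_one₀ hx0.le hx1
    have hlog : |Real.log x| ≤ 2 * x ^ (-(1/2) : ℝ) := by
      have h1 : Real.log x ≤ 0 := Real.log_nonpos hx0.le hx1
      rw [abs_of_nonpos h1]
      have h2 := Real.log_le_sub_one_of_pos hp
      rw [Real.log_rpow hx0] at h2
      nlinarith
    have h2 : ‖2 * x ^ (-(1/2):ℝ)‖ = 2 * x ^ (-(1/2):ℝ) := by
      rw [Real.norm_eq_abs, abs_of_nonneg (by positivity)]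
    rw [Real.norm_eq_abs, h2, abs_mul]
    calc |Real.log x| * |x ^ k| ≤ (2 * x ^ (-(1/2):ℝ)) * 1 :=
          mul_le_mul hlog hxk (abs_nonneg _) (by positivity)
      _ = 2 * x ^ (-(1/2):ℝ) := mul_one _

-- The key integral
lemma aux_integral_log_mul_pow (j : ℕ) (hj : 1 ≤ j) :
    ∫ x in (0:ℝ)..1, Real.log x * x ^ (j - 1) = -(1 / (j:ℝ)^2) := by
  obtain ⟨k, rfl⟩ : ∃ k, j = k + 1 := ⟨j - 1, by omega⟩
  have hk0 : ((k:ℝ) + 1) ≠ 0 := by positivity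
  set F : ℝ → ℝ := fun x => Real.log x * x ^ (k+1) / (k+1) - x ^ (k+1) / ((k:ℝ)+1)^2 with hF
  have hcont : ContinuousOn F (Set.Icc 0 1) := by
    intro x hx
    rcases eq_or_ne x 0 with rfl | hx0
    · have hT : Filter.Tendsto F (nhdsWithin 0 (Set.Ioi 0)) (nhds (F 0)) := by
        have hFval : F 0 = 0 := by simp [hF]
        rw [hFval]
        have T1 : Filter.Tendsto (fun x : ℝ => Real.log x * x ^ ((k:ℝ)+1))
            (nhdsWithin 0 (Set.Ioi 0)) (nhds 0) :=
          tendsto_log_mul_rpow_nhdsGT_zero (by positivity)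
        have T1' : Filter.Tendsto (fun x : ℝ => Real.log x * x ^ (k+1))
            (nhdsWithin 0 (Set.Ioi 0)) (nhds 0) := by
          apply T1.congr'
          filter_upwards [self_mem_nhdsWithin] with x hx
          rw [show ((k:ℝ)+1) = ((k+1 : ℕ) : ℝ) by push_cast; ring, Real.rpow_natCast]
        have T2 : Filter.Tendsto (fun x : ℝ => x ^ (k+1) / ((k:ℝ)+1)^2)
            (nhdsWithin 0 (Set.Ioi 0)) (nhds 0) := by
          have := ((continuous_pow (k+1)).div_const (((k:ℝ)+1)^2)).tendsto 0
          simp only [zero_pow (Nat.succ_ne_zero k), zero_div] at this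
          exact this.mono_left nhdsWithin_le_nhds
        have := (T1'.div_const ((k:ℝ)+1)).sub T2
        simpa using this
      have : ContinuousWithinAt F (Set.Ioi 0) 0 := hT
      refine (this.insert).mono ?_
      intro y hy
      rcases eq_or_ne y 0 with rfl | hy0
      · exact Set.mem_insert _ _
      · exact Set.mem_insert_of_mem _ (lt_of_le_of_ne hy.1 (Ne.symm hy0))
    · apply ContinuousAt.continuousWithinAt
      have h1 : ContinuousAt (fun x : ℝ => Real.log x * x ^ (k+1) / ((k:ℝ)+1)) x :=
        (((Real.continuousAt_log hx0).mul (continuous_pow (k+1)).continuousAt).div_const _)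
      have h2 : ContinuousAt (fun x : ℝ => x ^ (k+1) / ((k:ℝ)+1)^2) x :=
        ((continuous_pow (k+1)).continuousAt.div_const _)
      exact (h1.sub h2).congr (by filter_upwards with y; push_cast [hF, Pi.sub_apply]; ring_nf)
  have hderiv : ∀ x ∈ Set.Ioo (0:ℝ) 1,
      HasDerivWithinAt F (Real.log x * x ^ (k+1-1)) (Set.Ioi x) x := by
    intro x hx
    have hx0 : x ≠ 0 := ne_of_gt hx.1
    have h1 : HasDerivAt (fun y : ℝ => Real.log y * y ^ (k+1))
        (x⁻¹ * x ^ (k+1) + Real.log x * (((k:ℝ)+1) * x ^ k)) x := by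
      have := (Real.hasDerivAt_log hx0).mul (hasDerivAt_pow (k+1) x)
      simpa [Pi.mul_def] using this
    have h2 := (h1.div_const ((k:ℝ)+1)).sub ((hasDerivAt_pow (k+1) x).div_const (((k:ℝ)+1)^2))
    have heq : (x⁻¹ * x ^ (k+1) + Real.log x * (((k:ℝ)+1) * x ^ k)) / ((k:ℝ)+1)
        - ((k+1 : ℕ) : ℝ) * x ^ (k+1-1) / ((k:ℝ)+1)^2 = Real.log x * x ^ (k+1-1) := by
      have hxp : x⁻¹ * x ^ (k+1) = x ^ k := by
        rw [pow_succ, mul_comm (x ^ k) x, ← mul_assoc, inv_mul_cancel₀ hx0, one_mul]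
      push_cast
      simp only [Nat.add_sub_cancel, hxp]
      field_simp
      ring
    rw [← heq]
    exact h2.hasDerivWithinAt
  have hint : IntervalIntegrable (fun x => Real.log x * x ^ (k+1-1)) volume 0 1 :=
    aux_integrable_log_mul_pow _
  have := intervalIntegral.integral_eq_sub_of_hasDeriv_right_of_le (by norm_num) hcont
    hderiv hint
  rw [this]
  have hF1 : F 1 = -(1/((k:ℝ)+1)^2) := by simp [hF]
  have hF0 : F 0 = 0 := by simp [hF]
  rw [hF1, hF0]
  push_cast
  ring

-- Alternating binomial harmonic identity
lemma aux_alt_real (n : ℕ) (hn : n ≠ 0) :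
    ∑ j ∈ range (n+1), (-1:ℝ)^j * (n.choose j) = 0 := by
  have h := Int.alternating_sum_range_choose_of_ne hn
  have h2 : ((∑ m ∈ range (n + 1), ((-1) ^ m * n.choose m : ℤ) : ℤ) : ℝ) = 0 := by
    rw [h]; norm_num
  push_cast at h2
  exact h2

lemma aux_alt_harmonic (n : ℕ) :
    ∑ j ∈ Icc 1 n, (n.choose j : ℝ) * (-1)^j / j = -∑ l ∈ Icc 1 n, (1:ℝ)/l := by
  have key : ∀ m : ℕ, ∀ g : ℕ → ℝ, ∑ j ∈ Icc 1 m, g j = ∑ i ∈ range m, g (1 + i) := by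
    intro m g
    rw [← Finset.Ico_add_one_right_eq_Icc, Finset.sum_Ico_eq_sum_range]
    simp
  induction n with
  | zero => simp
  | succ n ih =>
    rw [key, key] at ih ⊢
    push_cast at ih ⊢
    have hsplit : ∀ i : ℕ, ((n+1).choose (1+i) : ℝ) = (n.choose (1+i) : ℝ) + (n.choose i : ℝ) := by
      intro i
      rw [show 1 + i = i + 1 by ring, Nat.choose_succ_succ n i]
      push_cast; ring
    have hstep : ∑ i ∈ range (n+1), ((n+1).choose (1+i) : ℝ) * (-1)^(1+i) / (1+i)
        = (∑ i ∈ range (n+1), (n.choose (1+i) : ℝ) * (-1)^(1+i) / (1+i))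
          + ∑ i ∈ range (n+1), (n.choose i : ℝ) * (-1)^(1+i) / (1+i) := by
      rw [← Finset.sum_add_distrib]
      refine Finset.sum_congr rfl fun i _ => ?_
      rw [hsplit]; ring
    have hA : ∑ i ∈ range (n+1), (n.choose (1+i) : ℝ) * (-1)^(1+i) / (1+i)
        = ∑ i ∈ range n, (n.choose (1+i) : ℝ) * (-1)^(1+i) / (1+i) := by
      rw [Finset.sum_range_succ, show 1 + n = n + 1 by ring, Nat.choose_succ_self]
      simp
    have hB : ∑ i ∈ range (n+1), (n.choose i : ℝ) * (-1)^(1+i) / (1+i) = -(1/((n:ℝ)+1)) := by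
      have hterm : ∀ i : ℕ, (n.choose i : ℝ) * (-1)^(1+i) / (1+i)
          = -(((n+1).choose (1+i) : ℝ) * (-1)^i) / ((n:ℝ)+1) := by
        intro i
        have hnat := Nat.add_one_mul_choose_eq n i
        have hreal : ((n:ℝ)+1) * (n.choose i : ℝ) = ((n+1).choose (i+1) : ℝ) * ((i:ℝ)+1) := by
          exact_mod_cast congrArg (Nat.cast : ℕ → ℝ) hnat
        have hi1 : ((i:ℝ)+1) ≠ 0 := by positivity
        have hn1 : ((n:ℝ)+1) ≠ 0 := by positivity
        rw [show 1 + i = i + 1 by ring, pow_succ]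
        rw [div_eq_div_iff (by positivity) (by positivity)]
        linear_combination (-(-1:ℝ)^i) * hreal
      rw [Finset.sum_congr rfl fun i _ => hterm i]
      rw [← Finset.sum_div]
      have halt := aux_alt_real (n+1) (Nat.succ_ne_zero n)
      rw [Finset.sum_range_succ'] at halt
      simp only [pow_zero, one_mul, Nat.choose_zero_right, Nat.cast_one] at halt
      have hsum : ∑ i ∈ range (n+1), -((((n+1).choose (1+i)):ℝ) * (-1)^i) = -1 := by
        have hpt : ∀ i : ℕ, -((((n+1).choose (1+i)):ℝ) * (-1)^i)
            = (-1:ℝ)^(i+1) * ((n+1).choose (i+1)) := by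
          intro i; rw [show 1 + i = i + 1 by ring, pow_succ]; ring
        rw [Finset.sum_congr rfl fun i _ => hpt i]
        linarith
      rw [hsum]
      ring
    rw [hstep, hA, ih, hB, Finset.sum_range_succ]
    push_cast
    ring

set_option maxHeartbeats 1000000 in
theorem stmt1 (N M : ℕ) (hN : 1 ≤ N) (hM : 2 ≤ M)
    (f : ℝ → ℝ)
    (hf : ∀ x : ℝ, f x = ∑ i ∈ range (N + 1), ∑ j ∈ Icc 1 (i * (M - 1)),
      (N.choose i : ℝ) * ((i * (M - 1)).choose j : ℝ) * (-1) ^ (i + j) * j * x ^ (j - 1)) :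
    ∫ x in Set.Ioo (0:ℝ) 1, Real.log x * f x
      = ∑ i ∈ range (N + 1), (N.choose i : ℝ) * (-1) ^ i *
          ∑ l ∈ Icc 1 (i * (M - 1)), (1 : ℝ) / l := by
  have h1 : (∫ x in Set.Ioo (0:ℝ) 1, Real.log x * f x)
      = ∫ x in (0:ℝ)..1, Real.log x * f x := by
    rw [intervalIntegral.integral_of_le (by norm_num : (0:ℝ) ≤ 1),
      MeasureTheory.integral_Ioc_eq_integral_Ioo]
  rw [h1]
  have h2 : ∀ x : ℝ, Real.log x * f x
      = ∑ i ∈ range (N+1), ∑ j ∈ Icc 1 (i*(M-1)),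
        ((N.choose i : ℝ) * ((i*(M-1)).choose j : ℝ) * (-1)^(i+j) * j)
          * (Real.log x * x^(j-1)) := by
    intro x
    rw [hf x, Finset.mul_sum]
    refine Finset.sum_congr rfl fun i _ => ?_
    rw [Finset.mul_sum]
    exact Finset.sum_congr rfl fun j _ => by ring
  rw [intervalIntegral.integral_congr (fun x _ => h2 x)]
  have hint : ∀ i ∈ range (N+1), IntervalIntegrable (fun x => ∑ j ∈ Icc 1 (i*(M-1)),
      ((N.choose i : ℝ) * ((i*(M-1)).choose j : ℝ) * (-1)^(i+j) * j)
        * (Real.log x * x^(j-1))) volume 0 1 := by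
    intro i _
    have h := IntervalIntegrable.sum (μ := volume) (a := (0:ℝ)) (b := 1)
      (Icc 1 (i*(M-1)))
      (f := fun j x => ((N.choose i : ℝ) * ((i*(M-1)).choose j : ℝ) * (-1)^(i+j) * j)
        * (Real.log x * x^(j-1)))
      (fun j _ => (aux_integrable_log_mul_pow (j-1)).const_mul _)
    have heq : (∑ j ∈ Icc 1 (i*(M-1)), fun x : ℝ =>
        ((N.choose i : ℝ) * ((i*(M-1)).choose j : ℝ) * (-1)^(i+j) * j)
          * (Real.log x * x^(j-1)))
        = fun x : ℝ => ∑ j ∈ Icc 1 (i*(M-1)),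
        ((N.choose i : ℝ) * ((i*(M-1)).choose j : ℝ) * (-1)^(i+j) * j)
          * (Real.log x * x^(j-1)) := by
      ext x; simp
    rwa [heq] at h
  have hI := intervalIntegral.integral_finset_sum (μ := volume) (a := (0:ℝ)) (b := 1)
    (s := range (N+1))
    (f := fun i x => ∑ j ∈ Icc 1 (i*(M-1)),
      ((N.choose i : ℝ) * ((i*(M-1)).choose j : ℝ) * (-1)^(i+j) * j)
        * (Real.log x * x^(j-1))) hint
  rw [hI]
  refine Finset.sum_congr rfl fun i _ => ?_
  have hJ := intervalIntegral.integral_finset_sum (μ := volume) (a := (0:ℝ)) (b := 1)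
    (s := Icc 1 (i*(M-1)))
    (f := fun j x => ((N.choose i : ℝ) * ((i*(M-1)).choose j : ℝ) * (-1)^(i+j) * j)
        * (Real.log x * x^(j-1)))
    (fun j _ => (aux_integrable_log_mul_pow (j-1)).const_mul _)
  rw [hJ]
  have h3 : ∀ j ∈ Icc 1 (i*(M-1)),
      (∫ x in (0:ℝ)..1, ((N.choose i : ℝ) * ((i*(M-1)).choose j : ℝ) * (-1)^(i+j) * j)
        * (Real.log x * x^(j-1)))
      = ((N.choose i : ℝ) * (-1)^i) * (-(((i*(M-1)).choose j : ℝ) * (-1)^j / j)) := by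
    intro j hj
    have hj1 : 1 ≤ j := (mem_Icc.mp hj).1
    have hj0 : (j:ℝ) ≠ 0 := by
      have : (0:ℕ) < j := hj1
      exact_mod_cast this.ne'
    rw [intervalIntegral.integral_const_mul, aux_integral_log_mul_pow j hj1, pow_add]
    field_simp
  rw [Finset.sum_congr rfl h3, ← Finset.mul_sum]
  congr 1
  have hB := aux_alt_harmonic (i*(M-1))
  rw [Finset.sum_neg_distrib, hB]
  ring
end

section
/- With N = 2^B ≥ 1 and number of antennas M ≥ 2, if ν = cos²(∠(g̃, ĝ)) has the RVQ density f_ν(ν) = ∑_{i=0}^{N} ∑_{j=1}^{i(M-1)} C(N,i) C(i(M-1),j) (-1)^{i+j} j ν^{j-1} on [0,1], then E[1 − ν] = N · β(N, M/(M−1)), where β denotes the Beta function. -/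
open Finset

-- alternating sum of binomials is 0 for n ≥ 1 (real version)
lemma alt_zero {n : ℕ} (hn : n ≠ 0) :
    ∑ i ∈ range (n + 1), (-1 : ℝ) ^ i * (n.choose i : ℝ) = 0 := by
  have := Int.alternating_sum_range_choose (n := n)
  rw [if_neg hn] at this
  have : ((∑ i ∈ range (n + 1), (-1 : ℤ) ^ i * (n.choose i : ℤ) : ℤ) : ℝ) = 0 := by
    rw [this]; norm_num
  simpa using this

-- ∑_{j=0}^n C(n,j)(-1)^j/(j+1) = 1/(n+1)
lemma inner_full (n : ℕ) :
    ∑ j ∈ range (n + 1), (n.choose j : ℝ) * (-1) ^ j / (j + 1) = 1 / (n + 1) := by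
  have key : ∀ j : ℕ, (n.choose j : ℝ) / (j + 1) = ((n+1).choose (j+1) : ℝ) / (n + 1) := by
    intro j
    have h := Nat.add_one_mul_choose_eq n j
    have h' : ((n+1) * n.choose j : ℕ) = ((n+1).choose (j+1) * (j+1) : ℕ) := by
      simpa [Nat.succ_eq_add_one] using h
    have hcast : ((n:ℝ)+1) * (n.choose j : ℝ) = ((n+1).choose (j+1) : ℝ) * ((j:ℝ)+1) := by
      exact_mod_cast congrArg (Nat.cast : ℕ → ℝ) h'
    have hj : ((j:ℝ)+1) ≠ 0 := by positivity
    have hn : ((n:ℝ)+1) ≠ 0 := by positivity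
    field_simp
    linarith [hcast]
  calc ∑ j ∈ range (n + 1), (n.choose j : ℝ) * (-1) ^ j / (j + 1)
      = ∑ j ∈ range (n + 1), (-1:ℝ)^j * (((n+1).choose (j+1) : ℝ) / (n + 1)) := by
        refine Finset.sum_congr rfl fun j _ => ?_
        rw [mul_comm, mul_div_assoc, key j]
    _ = 1 / (n+1) := by
        have h0 : ∑ i ∈ range (n + 2), (-1 : ℝ) ^ i * ((n+1).choose i : ℝ) = 0 :=
          alt_zero (by omega)
        rw [Finset.sum_range_succ'] at h0
        field_simp at h0
        have hs : ∑ x ∈ range (n + 1), (-1:ℝ) ^ x * ((n+1).choose (x+1) : ℝ) = 1 := by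
          have : ∑ k ∈ range (n + 1), (-1:ℝ) ^ (k+1) * ((n+1).choose (k+1) : ℝ)
              = -∑ x ∈ range (n + 1), (-1:ℝ) ^ x * ((n+1).choose (x+1) : ℝ) := by
            rw [← Finset.sum_neg_distrib]
            exact Finset.sum_congr rfl fun k _ => by ring
          rw [this] at h0; simp only [Nat.choose_zero_right, Nat.cast_one] at h0; linarith
        calc ∑ j ∈ range (n + 1), (-1:ℝ) ^ j * (((n+1).choose (j+1) : ℝ) / (n + 1))
            = (∑ j ∈ range (n + 1), (-1:ℝ) ^ j * ((n+1).choose (j+1) : ℝ)) / (n+1) := by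
              rw [Finset.sum_div]
              exact Finset.sum_congr rfl fun j _ => by ring
          _ = 1 / (n+1) := by rw [hs]

lemma partial_frac (m x : ℝ) (hm : 0 < m) (hx : 0 < x) : ∀ N : ℕ,
    ∑ i ∈ range (N + 1), (-1 : ℝ) ^ i * (N.choose i : ℝ) / (i * m + x)
      = (N.factorial : ℝ) * m ^ N / ∏ k ∈ range (N + 1), ((k : ℝ) * m + x) := by
  intro N
  induction N generalizing x with
  | zero => simp
  | succ N ih =>
    have hpos : ∀ y : ℝ, 0 < y → ∀ n : ℕ, 0 < ∏ k ∈ range n, ((k : ℝ) * m + y) := by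
      intro y hy n
      exact Finset.prod_pos fun k _ => by positivity
    have hsum : ∑ i ∈ range (N + 2), (-1 : ℝ) ^ i * ((N+1).choose i : ℝ) / (i * m + x)
        = ∑ i ∈ range (N + 2), ((N+1).choose i : ℝ) * ((-1:ℝ)^i / (i * m + x)) := by
      exact Finset.sum_congr rfl fun i _ => by ring
    rw [hsum, Finset.sum_choose_succ_mul (fun i j => (-1:ℝ)^i / (i * m + x)) N]
    have h1 : ∑ i ∈ range (N + 1), (N.choose i : ℝ) * ((-1:ℝ)^i / (i * m + x))
        = (N.factorial : ℝ) * m ^ N / ∏ k ∈ range (N + 1), ((k : ℝ) * m + x) := by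
      rw [← ih x hx]
      exact Finset.sum_congr rfl fun i _ => by ring
    have h2 : ∑ i ∈ range (N + 1), (N.choose i : ℝ) * ((-1:ℝ)^(i+1) / (((i+1:ℕ):ℝ) * m + x))
        = -((N.factorial : ℝ) * m ^ N / ∏ k ∈ range (N + 1), ((k : ℝ) * m + (m + x))) := by
      rw [← ih (m + x) (by positivity), ← Finset.sum_neg_distrib]
      refine Finset.sum_congr rfl fun i _ => ?_
      have : ((i:ℝ)+1) * m + x = (i:ℝ) * m + (m + x) := by ring
      push_cast
      rw [this]; ring
    rw [h1, h2]
    -- now algebra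
    set P := ∏ k ∈ range (N + 1), ((k : ℝ) * m + x) with hP
    set Q := ∏ k ∈ range (N + 1), ((k : ℝ) * m + (m + x)) with hQ
    have hPpos : 0 < P := hpos x hx _
    have hQpos : 0 < Q := hpos (m+x) (by positivity) _
    have hR : ∏ k ∈ range (N + 2), ((k : ℝ) * m + x) = Q * x := by
      rw [Finset.prod_range_succ']
      simp only [hQ]
      congr 1
      · exact Finset.prod_congr rfl fun k _ => by push_cast; ring
      · norm_num
    have hR2 : ∏ k ∈ range (N + 2), ((k : ℝ) * m + x) = P * (((N:ℝ)+1) * m + x) := by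
      rw [Finset.prod_range_succ, ← hP]; push_cast; ring
    rw [hR]
    have hc : P * (((N:ℝ)+1) * m + x) = Q * x := by rw [← hR2, hR]
    have hxne : x ≠ 0 := ne_of_gt hx
    have hPne : P ≠ 0 := ne_of_gt hPpos
    have hQne : Q ≠ 0 := ne_of_gt hQpos
    have key : (1:ℝ)/P - 1/Q = ((N:ℝ)+1)*m/(Q*x) := by
      rw [div_sub_div _ _ hPne hQne, div_eq_div_iff (by positivity) (by positivity)]
      linear_combination (-Q) * hc
    calc (N.factorial : ℝ) * m ^ N / P + -((N.factorial : ℝ) * m ^ N / Q)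
        = (N.factorial : ℝ) * m ^ N * ((1:ℝ)/P - 1/Q) := by ring
      _ = (N.factorial : ℝ) * m ^ N * (((N:ℝ)+1)*m/(Q*x)) := by rw [key]
      _ = ((N+1).factorial : ℝ) * m ^ (N+1) / (Q * x) := by
          push_cast [Nat.factorial_succ]; ring

lemma gamma_prod (x : ℝ) (hx : 0 < x) : ∀ n : ℕ,
    Real.Gamma (x + n) = Real.Gamma x * ∏ k ∈ range n, (x + k) := by
  intro n
  induction n with
  | zero => simp
  | succ n ih =>
    have h : x + ((n:ℝ)+1) = (x + n) + 1 := by ring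
    push_cast
    rw [h, Real.Gamma_add_one (by positivity), Finset.prod_range_succ, ih]
    ring

-- integral of one monomial term
lemma mono_int (c : ℝ) (j : ℕ) (hj : 1 ≤ j) :
    ∫ x in Set.Ioo (0:ℝ) 1, (1 - x) * (c * (j:ℝ) * x ^ (j-1)) = c / ((j:ℝ) + 1) := by
  rw [← MeasureTheory.integral_Ioc_eq_integral_Ioo,
      ← intervalIntegral.integral_of_le (by norm_num : (0:ℝ) ≤ 1)]
  have heq : ∀ x : ℝ, (1 - x) * (c * (j:ℝ) * x ^ (j-1))
      = c * (j:ℝ) * x ^ (j-1) - c * (j:ℝ) * x ^ j := by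
    intro x
    have : x ^ j = x * x ^ (j - 1) := by
      conv_lhs => rw [show j = (j-1) + 1 by omega]
      rw [pow_succ]; ring
    rw [this]; ring
  simp only [heq]
  rw [intervalIntegral.integral_sub ((intervalIntegral.intervalIntegrable_pow _).const_mul _)
      ((intervalIntegral.intervalIntegrable_pow _).const_mul _),
    intervalIntegral.integral_const_mul, intervalIntegral.integral_const_mul,
    integral_pow, integral_pow]
  have h1 : ((j:ℝ) - 1 + 1 : ℝ) ≠ 0 := by
    have : (1:ℝ) ≤ j := by exact_mod_cast hj
    intro h; nlinarith
  have hjc : ((j - 1 : ℕ) : ℝ) = (j:ℝ) - 1 := by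
    have : (1:ℕ) ≤ j := hj
    push_cast [this]; ring
  rw [hjc]
  have hj0 : (j:ℝ) ≠ 0 := by positivity
  have hj1 : (j:ℝ) + 1 ≠ 0 := by positivity
  field_simp
  ring

lemma inner_icc (n : ℕ) :
    ∑ j ∈ Icc 1 n, (n.choose j : ℝ) * (-1) ^ j / ((j:ℝ) + 1) = 1 / ((n:ℝ) + 1) - 1 := by
  have hset : Icc 1 n = (range (n + 1)).erase 0 := by
    ext k; simp only [Finset.mem_Icc, Finset.mem_range, Finset.mem_erase]; omega
  have h0 : (0:ℕ) ∈ range (n + 1) := by simp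
  have inner_full := inner_full n
  rw [← Finset.add_sum_erase _ (fun j => (n.choose j : ℝ) * (-1) ^ j / ((j:ℝ) + 1)) h0] at inner_full
  rw [hset]
  have : (n.choose 0 : ℝ) * (-1) ^ 0 / ((0:ℕ) + 1 : ℝ) = 1 := by norm_num
  rw [this] at inner_full
  linarith

theorem stmt10 (B N M : ℕ) (hN : N = 2 ^ B) (hM : 2 ≤ M)
    (f : ℝ → ℝ)
    (hf : ∀ x : ℝ, f x = ∑ i ∈ range (N + 1), ∑ j ∈ Icc 1 (i * (M - 1)),
      (N.choose i : ℝ) * ((i * (M - 1)).choose j : ℝ) * (-1) ^ (i + j) * j * x ^ (j - 1)) :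
    ∫ x in Set.Ioo (0:ℝ) 1, (1 - x) * f x
      = (N : ℝ) * (Real.Gamma N * Real.Gamma ((M : ℝ) / ((M : ℝ) - 1)) /
          Real.Gamma ((N : ℝ) + (M : ℝ) / ((M : ℝ) - 1))) := by
  have hN1 : 1 ≤ N := by rw [hN]; exact Nat.one_le_two_pow
  set m : ℕ := M - 1 with hm
  have hm1 : 1 ≤ m := by omega
  have hmc : ((m : ℕ) : ℝ) = (M : ℝ) - 1 := by
    rw [hm]; push_cast [Nat.cast_sub (by omega : 1 ≤ M)]; ring
  have hmpos : (0:ℝ) < (m:ℝ) := by exact_mod_cast hm1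
  -- Step 1: the integral equals a double sum
  have step1 : ∫ x in Set.Ioo (0:ℝ) 1, (1 - x) * f x
      = ∑ i ∈ range (N+1), ∑ j ∈ Icc 1 (i*m),
          ((N.choose i : ℝ) * ((i*m).choose j : ℝ) * (-1)^(i+j)) / ((j:ℝ)+1) := by
    have hint : ∀ (i j : ℕ), MeasureTheory.IntegrableOn
        (fun x : ℝ => (1 - x) * ((N.choose i : ℝ) * ((i*m).choose j : ℝ) * (-1)^(i+j) * j * x ^ (j-1)))
        (Set.Ioo (0:ℝ) 1) := by
      intro i j
      have hc : Continuous (fun x : ℝ =>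
          (1 - x) * ((N.choose i : ℝ) * ((i*m).choose j : ℝ) * (-1)^(i+j) * j * x ^ (j-1))) := by
        fun_prop
      exact (hc.integrableOn_Icc (a := 0) (b := 1)).mono_set Set.Ioo_subset_Icc_self
    have hrw : ∀ x : ℝ, (1 - x) * f x = ∑ i ∈ range (N+1), ∑ j ∈ Icc 1 (i*m),
        (1 - x) * ((N.choose i : ℝ) * ((i*m).choose j : ℝ) * (-1)^(i+j) * j * x ^ (j-1)) := by
      intro x
      rw [hf x, Finset.mul_sum]
      exact Finset.sum_congr rfl fun i _ => by rw [Finset.mul_sum]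
    simp only [hrw]
    rw [MeasureTheory.integral_finset_sum _ (fun i _ =>
      MeasureTheory.integrable_finset_sum _ (fun j _ => hint i j))]
    refine Finset.sum_congr rfl fun i _ => ?_
    rw [MeasureTheory.integral_finset_sum _ (fun j _ => hint i j)]
    refine Finset.sum_congr rfl fun j hj => ?_
    have hj1 : 1 ≤ j := (Finset.mem_Icc.mp hj).1
    exact mono_int ((N.choose i : ℝ) * ((i*m).choose j : ℝ) * (-1)^(i+j)) j hj1
  -- Step 2: inner sums
  have step2 : ∀ i : ℕ, ∑ j ∈ Icc 1 (i*m),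
        ((N.choose i : ℝ) * ((i*m).choose j : ℝ) * (-1)^(i+j)) / ((j:ℝ)+1)
      = (-1:ℝ)^i * (N.choose i : ℝ) * (1 / (((i*m : ℕ):ℝ) + 1) - 1) := by
    intro i
    rw [← inner_icc (i*m), Finset.mul_sum]
    refine Finset.sum_congr rfl fun j _ => ?_
    rw [pow_add]; ring
  simp only [step2] at step1
  -- Step 3: outer sum via partial fractions
  have cast1 : ∀ i : ℕ, (((i*m : ℕ):ℝ) + 1) = (i:ℝ) * (m:ℝ) + 1 := by
    intro i; push_cast; ring
  have step3 : ∑ i ∈ range (N+1), (-1:ℝ)^i * (N.choose i : ℝ) * (1 / (((i*m : ℕ):ℝ) + 1) - 1)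
      = (N.factorial : ℝ) * (m:ℝ) ^ N / ∏ k ∈ range (N + 1), ((k : ℝ) * (m:ℝ) + 1) := by
    have expand : ∀ i ∈ range (N+1), (-1:ℝ)^i * (N.choose i : ℝ) * (1 / (((i*m : ℕ):ℝ) + 1) - 1)
        = (-1:ℝ)^i * (N.choose i : ℝ) / ((i:ℝ) * (m:ℝ) + 1) - (-1:ℝ)^i * (N.choose i : ℝ) := by
      intro i _
      rw [cast1 i]
      have : (i:ℝ) * (m:ℝ) + 1 ≠ 0 := by positivity
      field_simp
    rw [Finset.sum_congr rfl expand, Finset.sum_sub_distrib,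
      partial_frac (m:ℝ) 1 hmpos one_pos N, alt_zero (by omega : N ≠ 0)]
    ring
  rw [step1, step3]
  -- Step 4: rewrite RHS
  have hMm : (M:ℝ) - 1 ≠ 0 := by rw [← hmc]; positivity
  have ha : (M : ℝ) / ((M : ℝ) - 1) = 1 + 1/(m:ℝ) := by
    rw [← hmc]; field_simp
    have : (M:ℝ) = ((m:ℝ) + 1) := by rw [hmc]; ring
    linarith [this]
  set a : ℝ := 1/(m:ℝ) with hadef
  have hapos : 0 < a := by positivity
  have hgamma : Real.Gamma ((N : ℝ) + (M : ℝ) / ((M : ℝ) - 1))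
      = Real.Gamma (1 + a) * ∏ k ∈ range N, (1 + a + (k:ℝ)) := by
    rw [ha, add_comm (N:ℝ)]
    exact gamma_prod (1+a) (by positivity) N
  have hNG : (N:ℝ) * Real.Gamma N = (N.factorial : ℝ) := by
    have h1 : (N:ℝ) = ((N-1:ℕ):ℝ) + 1 := by
      push_cast [Nat.cast_sub hN1]; ring
    have h2 : N * (N-1).factorial = N.factorial := by
      conv_rhs => rw [show N = (N-1)+1 by omega]
      rw [Nat.factorial_succ, Nat.sub_add_cancel hN1]
    have h3 : (((N-1:ℕ):ℝ) + 1) * (((N-1).factorial : ℕ) : ℝ) = ((N.factorial : ℕ) : ℝ) := by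
      rw [← h1]; exact_mod_cast h2
    rw [h1, Real.Gamma_nat_eq_factorial]
    exact h3
  have hGne : Real.Gamma (1 + a) ≠ 0 :=
    ne_of_gt (Real.Gamma_pos_of_pos (by positivity))
  rw [ha] at hgamma ⊢
  rw [hgamma]
  have hprodne : ∀ k : ℕ, (1 + a + (k:ℝ)) ≠ 0 := fun k => by positivity
  have hPne : (∏ k ∈ range N, (1 + a + (k:ℝ))) ≠ 0 :=
    Finset.prod_ne_zero_iff.mpr fun k _ => hprodne k
  -- relate the two products
  have hmne : (m:ℝ) ≠ 0 := ne_of_gt hmpos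
  have hprod : ∏ k ∈ range (N + 1), ((k : ℝ) * (m:ℝ) + 1)
      = (∏ k ∈ range N, (1 + a + (k:ℝ))) * (m:ℝ)^N := by
    rw [Finset.prod_range_succ']
    have h0 : ((0:ℕ):ℝ) * (m:ℝ) + 1 = 1 := by norm_num
    rw [h0, mul_one]
    calc ∏ k ∈ range N, (((k+1:ℕ):ℝ) * (m:ℝ) + 1)
        = ∏ k ∈ range N, ((1 + a + (k:ℝ)) * (m:ℝ)) := by
          refine Finset.prod_congr rfl fun k _ => ?_
          push_cast
          field_simp [hadef]
          rw [hadef, mul_add, mul_add, mul_one_div_cancel hmne]; ring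
      _ = (∏ k ∈ range N, (1 + a + (k:ℝ))) * (m:ℝ)^N := by
          rw [Finset.prod_mul_distrib, Finset.prod_const, Finset.card_range]
  have hrhs : (N:ℝ) * (Real.Gamma N * Real.Gamma (1+a)
        / (Real.Gamma (1+a) * ∏ k ∈ range N, (1 + a + (k:ℝ))))
      = (N.factorial : ℝ) / ∏ k ∈ range N, (1 + a + (k:ℝ)) := by
    rw [← hNG]
    field_simp
  rw [hrhs, hprod, mul_div_mul_right _ _ (pow_ne_zero N hmne)]
end
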